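/- arXiv:1207.4710 — 3 statements merged into one kernel-verified Lean document; each statement's English description precedes it below -/
import Mathlib

section
/- Let L be a real number with L > 1, let N be a natural number with (N : ℝ) + 1 ≥ 4·L, and let K be a real number with 0 ≤ K ≤ L. Then (2·L/(N+1))·(1 − 2^{−(N+1)}) + 2^{−N}·K < 3/4 (and in particular this quantity is strictly less than 1). -/
theorem stmt_0 (L : ℝ) (hL : 1 < L) (N : ℕ) (hN : (N : ℝ) + 1 ≥ 4 * L)
    (K : ℝ) (hK0 : 0 ≤ K) (hKL : K ≤ L) :
    (2 * L / ((N : ℝ) + 1)) * (1 - (2 : ℝ) ^ (-((N : ℝ) + 1))) +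
      (2 : ℝ) ^ (-(N : ℝ)) * K < 3 / 4 ∧
    (2 * L / ((N : ℝ) + 1)) * (1 - (2 : ℝ) ^ (-((N : ℝ) + 1))) +
      (2 : ℝ) ^ (-(N : ℝ)) * K < 1 := by
  have hNpos : (0:ℝ) < (N:ℝ) + 1 := by positivity
  have hpN : (2:ℝ) ^ (-(N:ℝ)) = ((2:ℝ)^N)⁻¹ := by
    rw [Real.rpow_neg (by norm_num), Real.rpow_natCast]
  have hpN1 : (2:ℝ) ^ (-((N:ℝ)+1)) = ((2:ℝ)^(N+1))⁻¹ := by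
    rw [show -((N:ℝ)+1) = -(((N+1:ℕ):ℝ)) by push_cast; ring,
      Real.rpow_neg (by norm_num), Real.rpow_natCast]
  have h2N : ((N:ℝ)+1) ≤ (2:ℝ)^N := by
    have h := Nat.lt_two_pow_self (n := N)
    exact_mod_cast Nat.succ_le_of_lt h
  have h2Npos : (0:ℝ) < (2:ℝ)^N := by positivity
  have h2N1pos : (0:ℝ) < (2:ℝ)^(N+1) := by positivity
  -- term1 < 1/2
  have hL0 : (0:ℝ) < L := by linarith
  have ht1 : (2 * L / ((N : ℝ) + 1)) ≤ 1/2 := by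
    rw [div_le_iff₀ hNpos]; linarith
  have hε : (0:ℝ) < ((2:ℝ)^(N+1))⁻¹ := by positivity
  have hε1 : ((2:ℝ)^(N+1))⁻¹ ≤ 1 := by
    apply inv_le_one_of_one_le₀
    exact one_le_pow₀ (by norm_num)
  have hterm1 : (2 * L / ((N : ℝ) + 1)) * (1 - (2 : ℝ) ^ (-((N : ℝ) + 1))) < 1/2 := by
    rw [hpN1]
    have hfac : 1 - ((2:ℝ)^(N+1))⁻¹ < 1 := by linarith
    have hpos : 0 < 2 * L / ((N:ℝ)+1) := by positivity
    nlinarith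
  -- term2 ≤ 1/4
  have hterm2 : (2 : ℝ) ^ (-(N : ℝ)) * K ≤ 1/4 := by
    rw [hpN]
    have h1 : ((2:ℝ)^N)⁻¹ * K ≤ ((2:ℝ)^N)⁻¹ * L := by
      apply mul_le_mul_of_nonneg_left hKL; positivity
    have h2 : L ≤ ((N:ℝ)+1)/4 := by linarith
    have h3 : ((2:ℝ)^N)⁻¹ * L ≤ ((2:ℝ)^N)⁻¹ * (((N:ℝ)+1)/4) := by
      apply mul_le_mul_of_nonneg_left h2; positivity
    have h4 : ((2:ℝ)^N)⁻¹ * (((N:ℝ)+1)/4) ≤ 1/4 := by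
      rw [inv_mul_le_iff₀ h2Npos]; linarith
    linarith
  constructor <;> linarith
end

section
/- Let L be a real number with L > 1, let N be a natural number with (N : ℝ) + 1 ≥ 4·L, let K be a real number with 0 ≤ K ≤ L, and let M be a real number with M ≥ 1. Then for every natural number j with 1 ≤ j ≤ N: (2·L/(N+1))·(1 − 2^{−(N+1)}) + 2^{−N}·K < (2·L/(N+1))·(1 − 2^{−j}) + 2^{−j}·j·L/(N+1) + 2^{−j}·M. -/
lemma aux_mono (j N : ℕ) (hj : 1 ≤ j) (hjN : j ≤ N) :
    (N : ℝ) * 2 ^ j ≤ (j : ℝ) * 2 ^ N := by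
  induction N with
  | zero => omega
  | succ n ih =>
    rcases Nat.lt_or_ge j (n+1) with h | h
    · have hn : j ≤ n := by omega
      have h2 := ih hn
      have hle : (2:ℝ) ^ j ≤ 2 ^ n := pow_le_pow_right₀ (by norm_num) hn
      have hj1 : (1:ℝ) ≤ (j:ℝ) := by exact_mod_cast hj
      push_cast
      have hps : (2:ℝ) ^ (n+1) = 2 ^ n * 2 := pow_succ 2 n
      have h4 : (2:ℝ) ^ n ≤ (j:ℝ) * 2 ^ n := le_mul_of_one_le_left (by positivity) hj1
      rw [hps]
      linarith
    · have : j = n + 1 := by omega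
      subst this; exact le_refl _

theorem stmt_1 (L : ℝ) (hL : 1 < L) (N : ℕ) (hN : (N : ℝ) + 1 ≥ 4 * L)
    (K : ℝ) (hK0 : 0 ≤ K) (hKL : K ≤ L) (M : ℝ) (hM : M ≥ 1) :
    ∀ j : ℕ, 1 ≤ j → j ≤ N →
      (2 * L / ((N : ℝ) + 1)) * (1 - (2 : ℝ) ^ (-((N : ℝ) + 1))) +
          (2 : ℝ) ^ (-(N : ℝ)) * K <
        (2 * L / ((N : ℝ) + 1)) * (1 - (2 : ℝ) ^ (-(j : ℝ))) +
          (2 : ℝ) ^ (-(j : ℝ)) * (j : ℝ) * L / ((N : ℝ) + 1) +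
          (2 : ℝ) ^ (-(j : ℝ)) * M := by
  intro j hj hjN
  have key : ∀ m : ℕ, (2:ℝ) ^ (-(m:ℝ)) = ((2:ℝ) ^ m)⁻¹ := by
    intro m
    rw [Real.rpow_neg (by norm_num), Real.rpow_natCast]
  rw [show -((N:ℝ)+1) = -((N+1:ℕ):ℝ) by push_cast; ring, key, key, key]
  set p : ℝ := (2:ℝ) ^ j with hp
  set q : ℝ := (2:ℝ) ^ N with hq
  have hqN1 : (2:ℝ) ^ (N+1) = 2 * q := by rw [hq, pow_succ]; ring
  rw [hqN1]
  have hp0 : (0:ℝ) < p := by positivity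
  have hq0 : (0:ℝ) < q := by positivity
  have hpq : p ≤ q := pow_le_pow_right₀ (by norm_num) hjN
  have hmono : (N : ℝ) * p ≤ (j : ℝ) * q := aux_mono j N hj hjN
  have hN1 : (0:ℝ) < (N:ℝ) + 1 := by positivity
  set u : ℝ := p⁻¹ with hu
  set v : ℝ := q⁻¹ with hv
  have hu0 : 0 < u := by positivity
  have hv0 : 0 < v := by positivity
  have hpu : p * u = 1 := mul_inv_cancel₀ (ne_of_gt hp0)
  have hqv : q * v = 1 := mul_inv_cancel₀ (ne_of_gt hq0)
  -- key monotonicity in u,v form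
  have hmono' : (N : ℝ) * v ≤ (j : ℝ) * u := by
    have h := mul_le_mul_of_nonneg_right hmono (le_of_lt (mul_pos hu0 hv0))
    calc (N:ℝ) * v = (N:ℝ) * p * (u * v) := by
          rw [mul_assoc, ← mul_assoc p u v, hpu, one_mul]
      _ ≤ (j:ℝ) * q * (u * v) := h
      _ = (j:ℝ) * u := by rw [mul_assoc, mul_comm u v, ← mul_assoc q v u, hqv, one_mul]
  have hvu : v ≤ u := by
    have := mul_le_mul_of_nonneg_right hpq (le_of_lt (mul_pos hu0 hv0))
    calc v = p * (u * v) := by rw [← mul_assoc, hpu, one_mul]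
      _ ≤ q * (u * v) := this
      _ = u := by rw [mul_comm u v, ← mul_assoc, hqv, one_mul]
  have hA : 2 * L / ((N:ℝ) + 1) ≤ 1 / 2 := by
    rw [div_le_div_iff₀ hN1 (by norm_num)]; linarith
  have hA0 : 0 < 2 * L / ((N:ℝ) + 1) := by positivity
  have hL4 : L / ((N:ℝ) + 1) ≤ 1 / 4 := by
    rw [div_le_div_iff₀ hN1 (by norm_num)]; linarith
  -- bound on K term: v * K ≤ N*L/(N+1) * v + u/4
  have c1 : v * K ≤ (N:ℝ) * L / ((N:ℝ)+1) * v + u / 4 := by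
    have h1 : v * K ≤ v * L := mul_le_mul_of_nonneg_left hKL (le_of_lt hv0)
    have h2 : v * L = (N:ℝ) * L / ((N:ℝ)+1) * v + L / ((N:ℝ)+1) * v := by
      field_simp
    have h3 : L / ((N:ℝ)+1) * v ≤ u / 4 := by
      have := mul_le_mul hL4 hvu (le_of_lt hv0) (by norm_num)
      linarith
    linarith
  have c2 : 2 * L / ((N:ℝ)+1) * u ≤ u / 2 := by
    have := mul_le_mul_of_nonneg_right hA (le_of_lt hu0)
    linarith
  have c3 : u ≤ u * M := by nlinarith
  have c4 : (N:ℝ) * L / ((N:ℝ)+1) * v ≤ u * (j:ℝ) * L / ((N:ℝ)+1) := by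
    have h := mul_le_mul_of_nonneg_right hmono' (by positivity : (0:ℝ) ≤ L / ((N:ℝ)+1))
    calc (N:ℝ) * L / ((N:ℝ)+1) * v = (N:ℝ) * v * (L / ((N:ℝ)+1)) := by ring
      _ ≤ (j:ℝ) * u * (L / ((N:ℝ)+1)) := h
      _ = u * (j:ℝ) * L / ((N:ℝ)+1) := by ring
  have c5 : 0 < 2 * L / ((N:ℝ)+1) * (2 * q)⁻¹ := by positivity
  have hinv : (2 * q)⁻¹ = v / 2 := by rw [hv, mul_inv, inv_eq_one_div]; ring
  rw [hinv]
  nlinarith [hu0]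
end

section
/- Let L and N be real numbers with L > 1 and N ≥ 4·L − 1. Then for every real number x with 0 ≤ x ≤ N: (1/4)·(2 − x) + 2^{x−N}·L < 1. -/
theorem stmt_2 (L N : ℝ) (hL : 1 < L) (hN : N ≥ 4 * L - 1) :
    ∀ x : ℝ, 0 ≤ x → x ≤ N →
      (1 / 4) * (2 - x) + (2 : ℝ) ^ (x - N) * L < 1 := by
  intro x hx0 hxN
  have hN3 : (3 : ℝ) < N := by linarith
  have hNpos : (0 : ℝ) < N := by linarith
  -- Bernoulli: 2^N ≥ 1 + N
  have hBern : 1 + N * 1 ≤ (1 + 1 : ℝ) ^ N :=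
    one_add_mul_self_le_rpow_one_add (by norm_num) (by linarith)
  have h2N : (4 : ℝ) * L ≤ (2 : ℝ) ^ N := by
    norm_num at hBern; linarith
  have hP : (0 : ℝ) < (2 : ℝ) ^ (-N) := Real.rpow_pos_of_pos (by norm_num) _
  have hPN : (2 : ℝ) ^ (-N) * (2 : ℝ) ^ N = 1 := by
    rw [← Real.rpow_add (by norm_num)]; simp
  have hA : (2 : ℝ) ^ (-N) * L < 1 / 2 := by
    nlinarith [mul_le_mul_of_nonneg_left h2N hP.le]
  -- convexity of exp: chord bound
  set t := x / N with ht
  have ht0 : 0 ≤ t := div_nonneg hx0 hNpos.le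
  have ht1 : t ≤ 1 := (div_le_one hNpos).2 hxN
  have hxt : x = t * N := by rw [ht, div_mul_cancel₀ x hNpos.ne']
  have hc : (x - N) * Real.log 2 = (1 - t) * (-N * Real.log 2) + t * 0 := by
    rw [hxt]; ring
  have hconv := convexOn_exp.2 (Set.mem_univ (-N * Real.log 2))
    (Set.mem_univ (0 : ℝ)) (by linarith : (0:ℝ) ≤ 1 - t) ht0 (by ring)
  simp only [smul_eq_mul] at hconv
  rw [← hc] at hconv
  have h2 : (0 : ℝ) < 2 := by norm_num
  have hr1 : (2 : ℝ) ^ (x - N) = Real.exp ((x - N) * Real.log 2) := by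
    rw [Real.rpow_def_of_pos h2, mul_comm]
  have hr2 : (2 : ℝ) ^ (-N) = Real.exp (-N * Real.log 2) := by
    rw [Real.rpow_def_of_pos h2, mul_comm]
  have hchord : (2 : ℝ) ^ (x - N) ≤ (1 - t) * (2 : ℝ) ^ (-N) + t := by
    rw [hr1, hr2]
    simpa [smul_eq_mul, Real.exp_zero] using hconv
  have hLpos : (0 : ℝ) < L := by linarith
  have hmul : (2 : ℝ) ^ (x - N) * L ≤ ((1 - t) * (2 : ℝ) ^ (-N) + t) * L :=
    mul_le_mul_of_nonneg_right hchord hLpos.le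
  have hB : (2 - N) / 4 + L < 1 := by linarith
  nlinarith [mul_nonneg (mul_nonneg (sub_nonneg.2 ht1) hP.le) hLpos.le,
    mul_le_mul_of_nonneg_left hB.le ht0, hA, hB, mul_le_mul_of_nonneg_left hA.le (sub_nonneg.2 ht1)]
end
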